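/- Let G be a loopless finite graph (parallel edges allowed) and let Θ be the kernel of the action of Aut(G) on V(G). Then Aut(G) has a subgroup Σ acting faithfully on V(G) such that Aut(G) = ΣΘ and Σ ∩ Θ = {1}. -/

import Mathlib

/-- A multigraph: an abstract edge set `E` together with an assignment of an unordered
pair of end-vertices to each edge. Loops and parallel edges are allowed. -/
structure Multigraph (V E : Type*) where
  ends : E → Sym2 V

namespace Multigraph

variable {V E : Type*}

/-- A multigraph is loopless if no edge is a loop. -/
def Loopless (G : Multigraph V E) : Prop := ∀ e, ¬ (G.ends e).IsDiag

/-- Two vertices are adjacent if some edge joins them. -/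
def Adj (G : Multigraph V E) (v w : V) : Prop := ∃ e, G.ends e = s(v, w)

/-- A multigraph is connected if any two vertices are joined by a walk. -/
def Connected (G : Multigraph V E) : Prop := ∀ v w : V, Relation.ReflTransGen G.Adj v w

open Classical in
/-- The number of times edge `e` is incident with vertex `v` (a loop counts twice). -/
noncomputable def incCount (G : Multigraph V E) (v : V) (e : E) : ℕ :=
  if G.ends e = Sym2.diag v then 2 else if v ∈ G.ends e then 1 else 0

/-- The degree of a vertex. -/
noncomputable def degree (G : Multigraph V E) [Fintype E] (v : V) : ℕ :=
  ∑ e, G.incCount v e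

open Classical in
/-- The degree of a vertex in the spanning subgraph with edge set `S`. -/
noncomputable def degreeIn (G : Multigraph V E) [Fintype E] (S : Set E) (v : V) : ℕ :=
  ∑ e, if e ∈ S then G.incCount v e else 0

/-- An orientation of a multigraph: each edge gets a tail and a head realizing its ends. -/
structure Orientation (G : Multigraph V E) where
  tail : E → V
  head : E → V
  consistent : ∀ e, G.ends e = s(tail e, head e)

open Classical in
/-- Sum of `φ` over the edges with tail `v`. -/
noncomputable def outflow [Fintype E] {G : Multigraph V E} (D : G.Orientation)
    (φ : E → ℤ) (v : V) : ℤ :=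
  ∑ e, if D.tail e = v then φ e else 0

open Classical in
/-- Sum of `φ` over the edges with head `v`. -/
noncomputable def inflow [Fintype E] {G : Multigraph V E} (D : G.Orientation)
    (φ : E → ℤ) (v : V) : ℤ :=
  ∑ e, if D.head e = v then φ e else 0

/-- `(D, φ)` is a `k`-flow: all values have absolute value `< k` and flow is conserved. -/
def IsFlow [Fintype E] {G : Multigraph V E} (D : G.Orientation) (φ : E → ℤ) (k : ℕ) : Prop :=
  (∀ e, |φ e| < (k : ℤ)) ∧ ∀ v : V, outflow D φ v = inflow D φ v

/-- `G` admits a nowhere-zero `k`-flow. -/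
def HasNowhereZeroFlow (G : Multigraph V E) [Fintype E] (k : ℕ) : Prop :=
  ∃ (D : G.Orientation) (φ : E → ℤ), IsFlow D φ k ∧ ∀ e, φ e ≠ 0

/-- The automorphism group of a multigraph, as a subgroup of `Perm V × Perm E`:
pairs of permutations compatible with the incidence structure. -/
def aut (G : Multigraph V E) : Subgroup (Equiv.Perm V × Equiv.Perm E) where
  carrier := {p | ∀ e, G.ends (p.2 e) = (G.ends e).map p.1}
  one_mem' := by
    intro e
    simp
  mul_mem' := by
    intro p q hp hq e
    have h1 := hp (q.2 e)
    have h2 := hq e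
    simp only [Prod.snd_mul, Prod.fst_mul, Equiv.Perm.mul_apply, Equiv.Perm.coe_mul]
    rw [h1, h2, Sym2.map_map]
  inv_mem' := by
    intro p hp e
    have h := hp ((p.2)⁻¹ e)
    simp only [Equiv.Perm.inv_def, Equiv.apply_symm_apply] at h
    rw [Prod.snd_inv, Prod.fst_inv, h, Sym2.map_map]
    have : (⇑(p.1)⁻¹ ∘ ⇑p.1) = id := by
      ext x; simp
    rw [this, Sym2.map_id, id_eq, Equiv.Perm.inv_def]

end Multigraph

namespace Multigraph

open Multigraph

variable {V E : Type*} [Fintype E] (G : Multigraph V E)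

open scoped Classical

/-- Number of edges with given ends. -/
noncomputable def fiberCard (p : Sym2 V) : ℕ := Fintype.card {e // G.ends e = p}

/-- A fixed enumeration of each parallel class of edges. -/
noncomputable def enum (p : Sym2 V) : {e // G.ends e = p} ≃ Fin (G.fiberCard p) :=
  Fintype.equivFin _

/-- The index of an edge within its parallel class. -/
noncomputable def idx (e : E) : ℕ := (G.enum (G.ends e) ⟨e, rfl⟩).val

lemma idx_lt (e : E) : G.idx e < G.fiberCard (G.ends e) :=
  (G.enum (G.ends e) ⟨e, rfl⟩).isLt

lemma idx_eq {p : Sym2 V} (e : E) (h : G.ends e = p) :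
    ((G.enum p) ⟨e, h⟩).val = G.idx e := by subst h; rfl

lemma symm_val_congr {p q : Sym2 V} (h : p = q) {i j : ℕ} (hij : i = j)
    (hi : i < G.fiberCard p) (hj : j < G.fiberCard q) :
    ((G.enum p).symm ⟨i, hi⟩).val = ((G.enum q).symm ⟨j, hj⟩).val := by
  subst h; subst hij; rfl

lemma symm_idx (e : E) (h : G.idx e < G.fiberCard (G.ends e)) :
    ((G.enum (G.ends e)).symm ⟨G.idx e, h⟩).val = e := by
  have : (⟨G.idx e, h⟩ : Fin (G.fiberCard (G.ends e)))
      = G.enum (G.ends e) ⟨e, rfl⟩ := Fin.ext rfl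
  rw [this, Equiv.symm_apply_apply]

/-- A vertex permutation is good if it preserves the sizes of parallel classes. -/
def Good (σ : Equiv.Perm V) : Prop :=
  ∀ p : Sym2 V, G.fiberCard (p.map σ) = G.fiberCard p

lemma good_one : G.Good 1 := by
  intro p
  simp [Sym2.map_id]

lemma good_mul {σ σ' : Equiv.Perm V} (h : G.Good σ) (h' : G.Good σ') :
    G.Good (σ' * σ) := by
  intro p
  have : Sym2.map (⇑(σ' * σ)) p = Sym2.map σ' (Sym2.map σ p) := by
    rw [Sym2.map_map]; rfl
  rw [this, h' (Sym2.map σ p), h p]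

lemma map_inv_map (σ : Equiv.Perm V) (p : Sym2 V) :
    Sym2.map ⇑σ⁻¹ (Sym2.map ⇑σ p) = p := by
  rw [Sym2.map_map]
  have : (⇑σ⁻¹ ∘ ⇑σ) = id := by ext x; simp
  rw [this, Sym2.map_id, id_eq]

lemma good_inv {σ : Equiv.Perm V} (h : G.Good σ) : G.Good σ⁻¹ := by
  intro p
  have h2 : Sym2.map ⇑σ (Sym2.map ⇑σ⁻¹ p) = p := by
    rw [Sym2.map_map]
    have : (⇑σ ∘ ⇑σ⁻¹) = id := by ext x; simp
    rw [this, Sym2.map_id, id_eq]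
  have h3 := h (Sym2.map ⇑σ⁻¹ p)
  rw [h2] at h3
  exact h3.symm

/-- The canonical index-preserving relabeling of edges induced by `σ`. -/
noncomputable def F (σ : Equiv.Perm V) (e : E) : E :=
  if h : G.idx e < G.fiberCard ((G.ends e).map σ) then
    ((G.enum ((G.ends e).map σ)).symm ⟨G.idx e, h⟩).val
  else e

lemma F_def {σ : Equiv.Perm V} (e : E)
    (h : G.idx e < G.fiberCard ((G.ends e).map σ)) :
    G.F σ e = ((G.enum ((G.ends e).map σ)).symm ⟨G.idx e, h⟩).val := dif_pos h

lemma F_cond {σ : Equiv.Perm V} (hσ : G.Good σ) (e : E) :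
    G.idx e < G.fiberCard ((G.ends e).map σ) := by
  rw [hσ]; exact G.idx_lt e

lemma ends_F {σ : Equiv.Perm V} (hσ : G.Good σ) (e : E) :
    G.ends (G.F σ e) = (G.ends e).map σ := by
  rw [G.F_def e (G.F_cond hσ e)]
  exact ((G.enum ((G.ends e).map σ)).symm ⟨G.idx e, G.F_cond hσ e⟩).prop

lemma idx_F {σ : Equiv.Perm V} (hσ : G.Good σ) (e : E) :
    G.idx (G.F σ e) = G.idx e := by
  have he : G.ends (G.F σ e) = (G.ends e).map σ := G.ends_F hσ e
  rw [← G.idx_eq (G.F σ e) he]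
  have : (⟨G.F σ e, he⟩ : {e' // G.ends e' = (G.ends e).map σ})
      = (G.enum ((G.ends e).map σ)).symm ⟨G.idx e, G.F_cond hσ e⟩ := by
    apply Subtype.ext
    exact G.F_def e (G.F_cond hσ e)
  rw [this, Equiv.apply_symm_apply]

lemma F_one (e : E) : G.F 1 e = e := by
  have h1 : (G.ends e).map ⇑(1 : Equiv.Perm V) = G.ends e := by
    simp [Sym2.map_id]
  have hc : G.idx e < G.fiberCard ((G.ends e).map ⇑(1 : Equiv.Perm V)) :=
    G.F_cond G.good_one e
  rw [G.F_def e hc]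
  rw [G.symm_val_congr h1 rfl hc (h1 ▸ hc)]
  exact G.symm_idx e _

lemma F_comp {σ σ' : Equiv.Perm V} (hσ : G.Good σ) (hσ' : G.Good σ') (e : E) :
    G.F σ' (G.F σ e) = G.F (σ' * σ) e := by
  have hc' : G.idx (G.F σ e) < G.fiberCard ((G.ends (G.F σ e)).map σ') :=
    G.F_cond hσ' (G.F σ e)
  have hc : G.idx e < G.fiberCard ((G.ends e).map ⇑(σ' * σ)) :=
    G.F_cond (G.good_mul hσ hσ') e
  rw [G.F_def (G.F σ e) hc', G.F_def e hc]
  apply G.symm_val_congr _ (G.idx_F hσ e)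
  rw [G.ends_F hσ e, Sym2.map_map]
  rfl

lemma F_inv {σ : Equiv.Perm V} (hσ : G.Good σ) (e : E) :
    G.F σ⁻¹ (G.F σ e) = e := by
  rw [G.F_comp hσ (G.good_inv hσ) e, inv_mul_cancel, G.F_one e]

/-- The canonical edge permutation induced by a good vertex permutation. -/
noncomputable def T (σ : Equiv.Perm V) : Equiv.Perm E :=
  if h : G.Good σ then
    ⟨G.F σ, G.F σ⁻¹, fun e => G.F_inv h e,
      fun e => by
        have := G.F_inv (G.good_inv h) e
        rwa [inv_inv] at this⟩
  else 1

lemma T_apply {σ : Equiv.Perm V} (hσ : G.Good σ) (e : E) :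
    G.T σ e = G.F σ e := by
  rw [T, dif_pos hσ]; rfl

lemma T_symm_apply {σ : Equiv.Perm V} (hσ : G.Good σ) (e : E) :
    (G.T σ).symm e = G.F σ⁻¹ e := by
  rw [T, dif_pos hσ]; rfl

lemma T_one : G.T 1 = 1 := by
  ext e
  rw [G.T_apply G.good_one e, G.F_one e]
  rfl

lemma T_mul {σ σ' : Equiv.Perm V} (hσ : G.Good σ) (hσ' : G.Good σ') :
    G.T σ' * G.T σ = G.T (σ' * σ) := by
  ext e
  rw [Equiv.Perm.mul_apply, G.T_apply hσ, G.T_apply hσ', G.T_apply (G.good_mul hσ hσ'),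
    G.F_comp hσ hσ']

lemma T_inv {σ : Equiv.Perm V} (hσ : G.Good σ) : (G.T σ)⁻¹ = G.T σ⁻¹ := by
  ext e
  have h1 : (G.T σ)⁻¹ e = (G.T σ).symm e := rfl
  rw [h1, G.T_symm_apply hσ, G.T_apply (G.good_inv hσ)]

lemma mem_aut_T {σ : Equiv.Perm V} (hσ : G.Good σ) :
    ((σ, G.T σ) : Equiv.Perm V × Equiv.Perm E) ∈ G.aut := by
  intro e
  rw [show ((σ, G.T σ) : Equiv.Perm V × Equiv.Perm E).2 = G.T σ from rfl,
    G.T_apply hσ e, G.ends_F hσ e]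

lemma good_of_aut {g : Equiv.Perm V × Equiv.Perm E} (hg : g ∈ G.aut) :
    G.Good g.1 := by
  intro p
  have hg' := G.aut.inv_mem hg
  have hinv : ∀ e, G.ends ((g.2)⁻¹ e) = (G.ends e).map ⇑(g.1)⁻¹ := by
    intro e
    have := hg' e
    simpa using this
  apply le_antisymm
  · exact Fintype.card_le_of_injective
      (fun x => (⟨(g.2)⁻¹ x.1, by rw [hinv x.1, x.2, map_inv_map]⟩ :
        {e // G.ends e = p}))
      (fun a b hab => by
        apply Subtype.ext
        have := congrArg Subtype.val hab
        simpa using this)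
  · exact Fintype.card_le_of_injective
      (fun x => (⟨g.2 x.1, by rw [hg x.1, x.2]⟩ : {e // G.ends e = p.map g.1}))
      (fun a b hab => by
        apply Subtype.ext
        have := congrArg Subtype.val hab
        simpa using this)

end Multigraph

open Multigraph in
/-- Let G be a loopless finite graph (parallel edges allowed) and Θ the kernel of the
action of Aut(G) on the vertices. Then Aut(G) has a subgroup Σ acting faithfully on the
vertices with Aut(G) = ΣΘ and Σ ∩ Θ = 1. -/
theorem stmt10 {V E : Type*} [Fintype V] [Fintype E]
    (G : Multigraph V E) (hloopless : G.Loopless) :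
    ∃ S : Subgroup (Equiv.Perm V × Equiv.Perm E),
      S ≤ G.aut ∧
      (∀ p ∈ S, p.1 = 1 → p = 1) ∧
      S ⊓ (G.aut ⊓ (MonoidHom.fst (Equiv.Perm V) (Equiv.Perm E)).ker) = ⊥ ∧
      (∀ g ∈ G.aut, ∃ s ∈ S,
        ∃ t ∈ G.aut ⊓ (MonoidHom.fst (Equiv.Perm V) (Equiv.Perm E)).ker, g = s * t) := by
  classical

  refine ⟨{
    carrier := {p | p ∈ G.aut ∧ p.2 = G.T p.1}
    one_mem' := ⟨G.aut.one_mem, by simp [G.T_one]⟩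
    mul_mem' := by
      rintro p q ⟨hp, hp2⟩ ⟨hq, hq2⟩
      refine ⟨G.aut.mul_mem hp hq, ?_⟩
      have : (p * q).2 = p.2 * q.2 := rfl
      rw [this, hp2, hq2, G.T_mul (G.good_of_aut hq) (G.good_of_aut hp)]
      rfl
    inv_mem' := by
      rintro p ⟨hp, hp2⟩
      refine ⟨G.aut.inv_mem hp, ?_⟩
      have : (p⁻¹).2 = (p.2)⁻¹ := rfl
      rw [this, hp2, G.T_inv (G.good_of_aut hp)]
      rfl }, ?_, ?_, ?_, ?_⟩
  · intro p hp
    exact hp.1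
  · intro p hp h1
    have h2 : p.2 = 1 := by
      rw [hp.2, h1, G.T_one]
    exact Prod.ext h1 h2
  · rw [eq_bot_iff]
    rintro p ⟨hpS, hpaut, hpker⟩
    have h1 : p.1 = 1 := hpker
    have h2 : p.2 = 1 := by
      rw [hpS.2, h1, G.T_one]
    rw [Subgroup.mem_bot]
    exact Prod.ext h1 h2
  · intro g hg
    have hgood : G.Good g.1 := G.good_of_aut hg
    refine ⟨(g.1, G.T g.1), ⟨G.mem_aut_T hgood, rfl⟩,
      (g.1, G.T g.1)⁻¹ * g, ⟨G.aut.mul_mem (G.aut.inv_mem (G.mem_aut_T hgood)) hg, ?_⟩, ?_⟩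
    · show ((g.1, G.T g.1)⁻¹ * g).1 = 1
      simp
    · rw [mul_inv_cancel_left]
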